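/- With the Lyapunov weights p_i of Theorem 1.1 — p_i(x) = λ_i(x)^{-1} e^{-qΛ∫₀^x λ_i^{-1} + qΛ∫₀¹ λ_i^{-1}} for 1 ≤ i ≤ k, p_i(x) = Γ^q λ_i(x)^{-1} e^{qΛ∫₀^x λ_i^{-1}} for k+1 ≤ i ≤ ℓ, and p_{m+i}(x) = Γ^q λ_{m+i}(x)^{-1} e^{qΛ∫₀^x λ_{m+i}^{-1} + qΛ∫₀¹ λ_i^{-1}} for ℓ+1 ≤ m+i ≤ m+k — one has A/a ≤ C^q e^{qΛ T_opt}, where A and a are the sup and inf over all indices and x of the weights, T_opt is defined by (1.10) of the paper, and C depends only on Γ and the bounds of the λ_i (not on q or Λ). -/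

import Mathlib

open Set in
/-- Estimate (2.25): with the Lyapunov weights `p_i` of Theorem 1.1, the ratio `A/a` of the
largest and smallest values of the weights satisfies `A/a ≤ C^q e^{qΛ T_opt}`, where `C`
depends only on `Γ` and the speeds `λ_i`, not on `q` or `Λ`. Here `ℓ = max{m,k}`,
`τ_i = ∫₀¹ λ_i⁻¹`, and `T_opt` is given by (1.10). `A` and `a` are characterized as the
least upper bound and the greatest lower bound of the weights over all indices and `x`. -/
theorem weight_ratio_estimate (k m : ℕ) (hk : 1 ≤ k) (hm : 1 ≤ m)
    (lam : ℕ → ℝ → ℝ)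
    (hcont : ∀ i, 1 ≤ i → i ≤ k + m → ContinuousOn (lam i) (Icc 0 1))
    (hpos : ∀ i, 1 ≤ i → i ≤ k + m → ∀ x ∈ Icc (0 : ℝ) 1, 0 < lam i x)
    (hordneg : ∀ i₁ i₂, 1 ≤ i₁ → i₁ < i₂ → i₂ ≤ k →
      ∀ x ∈ Icc (0 : ℝ) 1, lam i₂ x < lam i₁ x)
    (hordpos : ∀ i₁ i₂, k + 1 ≤ i₁ → i₁ < i₂ → i₂ ≤ k + m →
      ∀ x ∈ Icc (0 : ℝ) 1, lam i₁ x < lam i₂ x)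
    (Γ : ℝ) (hΓ : 1 ≤ Γ)
    (τ : ℕ → ℝ) (hτ : ∀ i, τ i = ∫ s in (0 : ℝ)..1, (lam i s)⁻¹)
    (Topt : ℝ)
    (hTopt : Topt =
      if k ≤ m then
        max ((Finset.Icc 1 k).sup' (Finset.nonempty_Icc.mpr hk)
          (fun i => τ i + τ (m + i))) (τ (k + 1))
      else
        (Finset.Icc 1 m).sup' (Finset.nonempty_Icc.mpr hm)
          (fun i => τ (k - m + i) + τ (k + i))) :
    ∃ C : ℝ, 0 < C ∧ ∀ q Λ : ℝ, 1 ≤ q → 1 ≤ Λ →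
      ∀ p : ℕ → ℝ → ℝ,
      (∀ i, 1 ≤ i → i ≤ k → ∀ x, p i x = (lam i x)⁻¹ *
        Real.exp (-(q * Λ) * (∫ s in (0 : ℝ)..x, (lam i s)⁻¹)
          + q * Λ * ∫ s in (0 : ℝ)..1, (lam i s)⁻¹)) →
      (∀ i, k + 1 ≤ i → i ≤ max m k → ∀ x, p i x = Γ ^ q * (lam i x)⁻¹ *
        Real.exp (q * Λ * ∫ s in (0 : ℝ)..x, (lam i s)⁻¹)) →
      (∀ i, max m k + 1 ≤ m + i → m + i ≤ m + k → ∀ x, p (m + i) x =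
        Γ ^ q * (lam (m + i) x)⁻¹ *
        Real.exp (q * Λ * (∫ s in (0 : ℝ)..x, (lam (m + i) s)⁻¹)
          + q * Λ * ∫ s in (0 : ℝ)..1, (lam i s)⁻¹)) →
      ∀ A a : ℝ,
      (∀ i, 1 ≤ i → i ≤ k + m → ∀ x ∈ Icc (0 : ℝ) 1, p i x ≤ A) →
      (∀ B : ℝ, (∀ i, 1 ≤ i → i ≤ k + m → ∀ x ∈ Icc (0 : ℝ) 1, p i x ≤ B) → A ≤ B) →
      (∀ i, 1 ≤ i → i ≤ k + m → ∀ x ∈ Icc (0 : ℝ) 1, a ≤ p i x) →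
      (∀ c : ℝ, (∀ i, 1 ≤ i → i ≤ k + m → ∀ x ∈ Icc (0 : ℝ) 1, c ≤ p i x) → c ≤ a) →
      A / a ≤ C ^ q * Real.exp (q * Λ * Topt) := by
  classical
  have hIcc : (Icc (0:ℝ) 1).Nonempty := ⟨0, by norm_num, by norm_num⟩
  -- uniform lower bound L for the speeds
  have hLex : ∀ n, n ≤ k + m → ∃ L : ℝ, 0 < L ∧
      ∀ i, 1 ≤ i → i ≤ n → ∀ x ∈ Icc (0:ℝ) 1, L ≤ lam i x := by
    intro n
    induction n with
    | zero => exact fun _ => ⟨1, one_pos, fun i h1 h2 => by omega⟩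
    | succ n ih =>
      intro hn
      obtain ⟨L, hLpos, hLle⟩ := ih (by omega)
      obtain ⟨x₀, hx₀, hmin⟩ :=
        isCompact_Icc.exists_isMinOn hIcc (hcont (n+1) (by omega) hn)
      refine ⟨min L (lam (n+1) x₀),
        lt_min hLpos (hpos (n+1) (by omega) hn x₀ hx₀), ?_⟩
      intro i h1 h2 x hx
      rcases Nat.lt_or_ge i (n+1) with h | h
      · exact le_trans (min_le_left _ _) (hLle i h1 (by omega) x hx)
      · have hin : i = n + 1 := by omega
        subst hin
        exact le_trans (min_le_right _ _) (hmin hx)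
  obtain ⟨L, hLpos, hLle⟩ := hLex (k+m) le_rfl
  -- uniform upper bound M
  have hMex : ∀ n, n ≤ k + m → ∃ M : ℝ, 0 < M ∧
      ∀ i, 1 ≤ i → i ≤ n → ∀ x ∈ Icc (0:ℝ) 1, lam i x ≤ M := by
    intro n
    induction n with
    | zero => exact fun _ => ⟨1, one_pos, fun i h1 h2 => by omega⟩
    | succ n ih =>
      intro hn
      obtain ⟨M, hMpos, hMle⟩ := ih (by omega)
      obtain ⟨x₀, hx₀, hmax⟩ :=
        isCompact_Icc.exists_isMaxOn hIcc (hcont (n+1) (by omega) hn)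
      refine ⟨max M (lam (n+1) x₀), lt_max_of_lt_left hMpos, ?_⟩
      intro i h1 h2 x hx
      rcases Nat.lt_or_ge i (n+1) with h | h
      · exact le_trans (hMle i h1 (by omega) x hx) (le_max_left _ _)
      · have hin : i = n + 1 := by omega
        subst hin
        exact le_trans (hmax hx) (le_max_right _ _)
  obtain ⟨M, hMpos, hMle⟩ := hMex (k+m) le_rfl
  have hΓ0 : (0:ℝ) < Γ := lt_of_lt_of_le one_pos hΓ
  -- integrability
  have huIcc : uIcc (0:ℝ) 1 = Icc 0 1 := uIcc_of_le (by norm_num)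
  have hcontInv : ∀ i, 1 ≤ i → i ≤ k+m →
      ContinuousOn (fun s => (lam i s)⁻¹) (Icc 0 1) := fun i h1 h2 =>
    (hcont i h1 h2).inv₀ (fun x hx => (hpos i h1 h2 x hx).ne')
  have hInt : ∀ i, 1 ≤ i → i ≤ k+m →
      IntervalIntegrable (fun s => (lam i s)⁻¹) MeasureTheory.volume 0 1 := by
    intro i h1 h2
    exact ContinuousOn.intervalIntegrable (huIcc ▸ hcontInv i h1 h2)
  -- partial integrals lie between 0 and τ i
  have hpart : ∀ i, 1 ≤ i → i ≤ k+m → ∀ x ∈ Icc (0:ℝ) 1,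
      0 ≤ (∫ s in (0:ℝ)..x, (lam i s)⁻¹) ∧
        (∫ s in (0:ℝ)..x, (lam i s)⁻¹) ≤ τ i := by
    intro i h1 h2 x hx
    obtain ⟨hx0, hx1⟩ := hx
    have hsub1 : uIcc (0:ℝ) x ⊆ uIcc (0:ℝ) 1 := by
      rw [huIcc, uIcc_of_le hx0]; exact Icc_subset_Icc le_rfl hx1
    have hsub2 : uIcc x (1:ℝ) ⊆ uIcc (0:ℝ) 1 := by
      rw [huIcc, uIcc_of_le hx1]; exact Icc_subset_Icc hx0 le_rfl
    have hi1 := (hInt i h1 h2).mono_set hsub1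
    have hi2 := (hInt i h1 h2).mono_set hsub2
    have hnn1 : 0 ≤ ∫ s in (0:ℝ)..x, (lam i s)⁻¹ :=
      intervalIntegral.integral_nonneg hx0 (fun s hs =>
        inv_nonneg.2 (hpos i h1 h2 s ⟨hs.1, le_trans hs.2 hx1⟩).le)
    have hnn2 : 0 ≤ ∫ s in x..(1:ℝ), (lam i s)⁻¹ :=
      intervalIntegral.integral_nonneg hx1 (fun s hs =>
        inv_nonneg.2 (hpos i h1 h2 s ⟨le_trans hx0 hs.1, hs.2⟩).le)
    have hadd : (∫ s in (0:ℝ)..x, (lam i s)⁻¹) + (∫ s in x..(1:ℝ), (lam i s)⁻¹)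
        = τ i := by
      rw [hτ]
      exact intervalIntegral.integral_add_adjacent_intervals hi1 hi2
    exact ⟨hnn1, by linarith⟩
  have hτnn : ∀ i, 1 ≤ i → i ≤ k+m → 0 ≤ τ i := by
    intro i h1 h2
    have := hpart i h1 h2 1 ⟨by norm_num, le_rfl⟩
    exact le_trans this.1 this.2
  -- monotonicity of τ with respect to pointwise comparison of speeds
  have hτmono : ∀ i j, 1 ≤ i → i ≤ k+m → 1 ≤ j → j ≤ k+m →
      (∀ x ∈ Icc (0:ℝ) 1, lam j x ≤ lam i x) → τ i ≤ τ j := by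
    intro i j hi1 hi2 hj1 hj2 hle
    rw [hτ, hτ]
    apply intervalIntegral.integral_mono_on (by norm_num)
      (hInt i hi1 hi2) (hInt j hj1 hj2)
    intro x hx
    exact inv_anti₀ (hpos j hj1 hj2 x hx) (hle x hx)
  -- comparisons with Topt
  have hτT1 : ∀ j, 1 ≤ j → j ≤ k → τ j ≤ Topt := by
    intro j hj1 hjk
    rw [hTopt]
    by_cases hkm : k ≤ m
    · rw [if_pos hkm]
      have h0 : 0 ≤ τ (m + j) := hτnn (m+j) (by omega) (by omega)
      have hmem : j ∈ Finset.Icc 1 k := Finset.mem_Icc.2 ⟨hj1, hjk⟩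
      have := Finset.le_sup' (fun i => τ i + τ (m + i)) hmem
      have hmax := le_max_left
        ((Finset.Icc 1 k).sup' (Finset.nonempty_Icc.mpr hk)
          (fun i => τ i + τ (m + i))) (τ (k+1))
      linarith
    · rw [if_neg hkm]
      have hjk' : τ j ≤ τ k := by
        rcases eq_or_lt_of_le hjk with h | h
        · subst h; exact le_rfl
        · exact hτmono j k hj1 (by omega) (by omega) (by omega)
            (fun x hx => (hordneg j k hj1 h le_rfl x hx).le)
      have h0 : 0 ≤ τ (k + m) := hτnn (k+m) (by omega) le_rfl
      have hmem : m ∈ Finset.Icc 1 m := Finset.mem_Icc.2 ⟨hm, le_rfl⟩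
      have hs := Finset.le_sup' (fun i => τ (k - m + i) + τ (k + i)) hmem
      have hkmm : k - m + m = k := by omega
      rw [hkmm] at hs
      linarith
  have hτT2 : ∀ j, k + 1 ≤ j → j ≤ max m k → τ j ≤ Topt := by
    intro j hj1 hj2
    have hkm : k ≤ m := by
      by_contra h
      have : max m k = k := by omega
      omega
    rw [hTopt, if_pos hkm]
    have hjle : τ j ≤ τ (k+1) := by
      rcases eq_or_lt_of_le hj1 with h | h
      · rw [← h]
      · exact hτmono j (k+1) (by omega) (by omega) (by omega) (by omega)
          (fun x hx => (hordpos (k+1) j le_rfl h (by omega) x hx).le)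
    exact le_trans hjle (le_max_right _ _)
  have hτT3 : ∀ j, max m k + 1 ≤ j → j ≤ m + k → τ j + τ (j - m) ≤ Topt := by
    intro j hj1 hj2
    rw [hTopt]
    by_cases hkm : k ≤ m
    · rw [if_pos hkm]
      have hmem : j - m ∈ Finset.Icc 1 k := Finset.mem_Icc.2 ⟨by omega, by omega⟩
      have hs := Finset.le_sup' (fun i => τ i + τ (m + i)) hmem
      have hmj : m + (j - m) = j := by omega
      rw [hmj] at hs
      have := le_max_left
        ((Finset.Icc 1 k).sup' (Finset.nonempty_Icc.mpr hk)
          (fun i => τ i + τ (m + i))) (τ (k+1))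
      linarith
    · rw [if_neg hkm]
      have hmem : j - k ∈ Finset.Icc 1 m := Finset.mem_Icc.2 ⟨by omega, by omega⟩
      have hs := Finset.le_sup' (fun i => τ (k - m + i) + τ (k + i)) hmem
      have h1' : k - m + (j - k) = j - m := by omega
      have h2' : k + (j - k) = j := by omega
      rw [h1', h2'] at hs
      linarith
  -- the constant
  refine ⟨Γ * max 1 (M / L), by positivity, ?_⟩
  intro q Λ hq hΛ p h1 h2 h3 A a hub hlub hlb hglb
  have hqΛ : 0 ≤ q * Λ := mul_nonneg (by linarith) (by linarith)
  have hΓq : 1 ≤ Γ ^ q := by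
    calc (1:ℝ) = Γ ^ (0:ℝ) := (Real.rpow_zero Γ).symm
    _ ≤ Γ ^ q := Real.rpow_le_rpow_of_exponent_le hΓ (by linarith)
  set E := Γ ^ q * L⁻¹ * Real.exp (q * Λ * Topt) with hE
  -- upper bound for all weights
  have hubd : ∀ j, 1 ≤ j → j ≤ k+m → ∀ x ∈ Icc (0:ℝ) 1, p j x ≤ E := by
    intro j hj1 hj2 x hx
    have hinvle : (lam j x)⁻¹ ≤ L⁻¹ :=
      inv_anti₀ hLpos (hLle j hj1 hj2 x hx)
    have hinvnn : 0 ≤ (lam j x)⁻¹ := inv_nonneg.2 (hpos j hj1 hj2 x hx).le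
    obtain ⟨hI0, hIτ⟩ := hpart j hj1 hj2 x hx
    have hstep : ∀ e : ℝ, e ≤ q * Λ * Topt → (lam j x)⁻¹ * Real.exp e ≤ E ∧
        Γ ^ q * (lam j x)⁻¹ * Real.exp e ≤ E := by
      intro e he
      have hexp : Real.exp e ≤ Real.exp (q * Λ * Topt) := Real.exp_le_exp.2 he
      have hb : (lam j x)⁻¹ * Real.exp e ≤ L⁻¹ * Real.exp (q * Λ * Topt) :=
        mul_le_mul hinvle hexp (Real.exp_pos _).le (inv_nonneg.2 hLpos.le)
      have hb2 : L⁻¹ * Real.exp (q * Λ * Topt) ≤ E := by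
        rw [hE]
        calc L⁻¹ * Real.exp (q * Λ * Topt)
            ≤ Γ ^ q * (L⁻¹ * Real.exp (q * Λ * Topt)) :=
              le_mul_of_one_le_left (by positivity) hΓq
          _ = Γ ^ q * L⁻¹ * Real.exp (q * Λ * Topt) := by ring
      constructor
      · linarith
      · rw [hE]
        have : Γ ^ q * ((lam j x)⁻¹ * Real.exp e) ≤
            Γ ^ q * (L⁻¹ * Real.exp (q * Λ * Topt)) :=
          mul_le_mul_of_nonneg_left hb (by positivity)
        calc Γ ^ q * (lam j x)⁻¹ * Real.exp e
            = Γ ^ q * ((lam j x)⁻¹ * Real.exp e) := by ring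
          _ ≤ Γ ^ q * (L⁻¹ * Real.exp (q * Λ * Topt)) := this
          _ = Γ ^ q * L⁻¹ * Real.exp (q * Λ * Topt) := by ring
    rcases Nat.lt_or_ge k j with hgt | hle
    · rcases Nat.lt_or_ge (max m k) j with hgt2 | hle2
      · -- third family
        have hmj : m + (j - m) = j := by omega
        have heq := h3 (j - m) (by omega) (by omega) x
        rw [hmj] at heq
        rw [heq, ← hτ (j - m)]
        refine (hstep _ ?_).2
        have hT := hτT3 j (by omega) (by omega)
        have hle' : (∫ s in (0:ℝ)..x, (lam j s)⁻¹) + τ (j - m) ≤ Topt := by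
          linarith
        calc q * Λ * (∫ s in (0:ℝ)..x, (lam j s)⁻¹) + q * Λ * τ (j - m)
            = q * Λ * ((∫ s in (0:ℝ)..x, (lam j s)⁻¹) + τ (j - m)) := by ring
          _ ≤ q * Λ * Topt := mul_le_mul_of_nonneg_left hle' hqΛ
      · -- second family
        rw [h2 j (by omega) hle2 x]
        refine (hstep _ ?_).2
        have hT := hτT2 j (by omega) hle2
        exact mul_le_mul_of_nonneg_left (le_trans hIτ hT) hqΛ
    · -- first family
      rw [h1 j hj1 hle x, ← hτ j]
      refine (hstep _ ?_).1
      have hT := hτT1 j hj1 hle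
      have h0 : 0 ≤ q * Λ * (∫ s in (0:ℝ)..x, (lam j s)⁻¹) := mul_nonneg hqΛ hI0
      have hτb : q * Λ * τ j ≤ q * Λ * Topt := mul_le_mul_of_nonneg_left hT hqΛ
      linarith
  -- lower bound for all weights
  have hlbd : ∀ j, 1 ≤ j → j ≤ k+m → ∀ x ∈ Icc (0:ℝ) 1, M⁻¹ ≤ p j x := by
    intro j hj1 hj2 x hx
    have hinvge : M⁻¹ ≤ (lam j x)⁻¹ :=
      inv_anti₀ (hpos j hj1 hj2 x hx) (hMle j hj1 hj2 x hx)
    have hinvnn : 0 ≤ (lam j x)⁻¹ := inv_nonneg.2 (hpos j hj1 hj2 x hx).le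
    obtain ⟨hI0, hIτ⟩ := hpart j hj1 hj2 x hx
    have hstep : ∀ e : ℝ, 0 ≤ e → M⁻¹ ≤ (lam j x)⁻¹ * Real.exp e ∧
        M⁻¹ ≤ Γ ^ q * (lam j x)⁻¹ * Real.exp e := by
      intro e he
      have hexp : 1 ≤ Real.exp e := by
        have := Real.exp_le_exp.2 he
        rwa [Real.exp_zero] at this
      have hb1 : (lam j x)⁻¹ ≤ (lam j x)⁻¹ * Real.exp e :=
        le_mul_of_one_le_right hinvnn hexp
      have hb2 : (lam j x)⁻¹ * Real.exp e ≤ Γ ^ q * ((lam j x)⁻¹ * Real.exp e) :=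
        le_mul_of_one_le_left (by positivity) hΓq
      refine ⟨by linarith, ?_⟩
      calc M⁻¹ ≤ (lam j x)⁻¹ * Real.exp e := by linarith
        _ ≤ Γ ^ q * ((lam j x)⁻¹ * Real.exp e) := hb2
        _ = Γ ^ q * (lam j x)⁻¹ * Real.exp e := by ring
    rcases Nat.lt_or_ge k j with hgt | hle
    · rcases Nat.lt_or_ge (max m k) j with hgt2 | hle2
      · have hmj : m + (j - m) = j := by omega
        have heq := h3 (j - m) (by omega) (by omega) x
        rw [hmj] at heq
        rw [heq, ← hτ (j - m)]
        refine (hstep _ ?_).2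
        have := hτnn (j - m) (by omega) (by omega)
        have := mul_nonneg hqΛ hI0
        nlinarith [mul_nonneg hqΛ (hτnn (j - m) (by omega) (by omega))]
      · rw [h2 j (by omega) hle2 x]
        exact (hstep _ (mul_nonneg hqΛ hI0)).2
    · rw [h1 j hj1 hle x, ← hτ j]
      refine (hstep _ ?_).1
      nlinarith [mul_le_mul_of_nonneg_left hIτ hqΛ]
  -- assemble
  have hA : A ≤ E := hlub _ hubd
  have ha : M⁻¹ ≤ a := hglb _ hlbd
  have hapos : (0:ℝ) < a := lt_of_lt_of_le (inv_pos.2 hMpos) ha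
  have hApos : (0:ℝ) < A :=
    lt_of_lt_of_le (lt_of_lt_of_le (inv_pos.2 hMpos)
      (hlbd 1 le_rfl (by omega) 0 ⟨le_rfl, by norm_num⟩))
      (hub 1 le_rfl (by omega) 0 ⟨le_rfl, by norm_num⟩)
  have hdiv : A / a ≤ A * M := by
    rw [div_le_iff₀ hapos]
    have hMa : 1 ≤ M * a := by
      have := mul_le_mul_of_nonneg_left ha hMpos.le
      rwa [mul_inv_cancel₀ hMpos.ne'] at this
    calc A = A * 1 := (mul_one A).symm
      _ ≤ A * (M * a) := mul_le_mul_of_nonneg_left hMa hApos.le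
      _ = A * M * a := by ring
  have hCq : Γ ^ q * (M / L) ≤ (Γ * max 1 (M / L)) ^ q := by
    have hmax1 : (1:ℝ) ≤ max 1 (M / L) := le_max_left _ _
    have hmaxq : max 1 (M / L) ≤ (max 1 (M / L)) ^ q := by
      calc max 1 (M / L) = (max 1 (M / L)) ^ (1:ℝ) := (Real.rpow_one _).symm
        _ ≤ (max 1 (M / L)) ^ q := Real.rpow_le_rpow_of_exponent_le hmax1 hq
    have hML : M / L ≤ (max 1 (M / L)) ^ q := le_trans (le_max_right _ _) hmaxq
    calc Γ ^ q * (M / L) ≤ Γ ^ q * (max 1 (M / L)) ^ q :=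
        mul_le_mul_of_nonneg_left hML (by positivity)
      _ = (Γ * max 1 (M / L)) ^ q :=
        (Real.mul_rpow hΓ0.le (by positivity)).symm
  calc A / a ≤ A * M := hdiv
    _ ≤ E * M := mul_le_mul_of_nonneg_right hA hMpos.le
    _ = Γ ^ q * (M / L) * Real.exp (q * Λ * Topt) := by
        rw [hE]; field_simp
    _ ≤ (Γ * max 1 (M / L)) ^ q * Real.exp (q * Λ * Topt) :=
        mul_le_mul_of_nonneg_right hCq (Real.exp_pos _).le
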